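/- If a Lyndon word v is a factor of a word u, then v is a factor of one of the Lyndon atoms of u (the factors appearing in the Lyndon decomposition of u as a nondecreasing product of Lyndon words). -/

import Mathlib

set_option linter.unusedSectionVars false

variable {X : Type*} [LinearOrder X] [WellFoundedLT X]

/-- The partial order `≺` on words: `u ≺ v` iff `u = r ++ x :: s`, `v = r ++ y :: t`
with letters `x < y`. -/
def Prec (u v : List X) : Prop :=
  ∃ (r s t : List X) (x y : X), x < y ∧ u = r ++ x :: s ∧ v = r ++ y :: t

/-- The pseudo-lexicographic order: `u <_lex v` iff `v` is a proper prefix of `u` or `u ≺ v`. -/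
def PLex (u v : List X) : Prop :=
  (v <+: u ∧ v ≠ u) ∨ Prec u v

/-- `u ≤_lex v`. -/
def PLexLe (u v : List X) : Prop := u = v ∨ PLex u v

/-- A Lyndon word (Kharchenko convention): a nonempty word strictly greater in the
pseudo-lexicographic order than each of its proper nonempty suffixes. -/
def IsLyndon (u : List X) : Prop :=
  u ≠ [] ∧ ∀ v w : List X, u = v ++ w → v ≠ [] → w ≠ [] → PLex w u


/-- `l` is the Lyndon decomposition of `u`: `u` is the concatenation of the Lyndon
words in `l`, listed in nondecreasing pseudo-lexicographic order. -/
def IsLyndonDecomp (u : List X) (l : List (List X)) : Prop :=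
  u = l.flatten ∧ (∀ v ∈ l, IsLyndon v) ∧ l.Chain' PLexLe

namespace LyndonAux

local instance gtSTO : IsStrictTotalOrder X (fun a b : X => b < a) where
  trichotomous a b h1 h2 := le_antisymm (not_lt.mp h1) (not_lt.mp h2)
  irrefl a := lt_irrefl a
  trans a b c h1 h2 := lt_trans h2 h1

theorem plex_iff (u v : List X) : PLex u v ↔ List.Lex (fun a b : X => b < a) v u := by
  constructor
  · rintro (⟨⟨c, rfl⟩, hne⟩ | ⟨r, s, t, x, y, hxy, rfl, rfl⟩)
    · induction v with
      | nil =>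
        cases c with
        | nil => exact absurd rfl hne
        | cons a d => exact List.Lex.nil
      | cons a v ih =>
        refine List.Lex.cons (ih ?_)
        intro h; exact hne (by simpa using h)
    · induction r with
      | nil => exact List.Lex.rel hxy
      | cons a r ih => exact List.Lex.cons ih
  · intro h
    induction h with
    | nil => exact Or.inl ⟨⟨_, rfl⟩, by simp⟩
    | @cons a l₁ l₂ h ih =>
      rcases ih with ⟨⟨c, hc⟩, hne⟩ | ⟨r, s, t, x, y, hxy, h1, h2⟩
      · exact Or.inl ⟨⟨c, by simp [← hc]⟩, by simpa using hne⟩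
      · exact Or.inr ⟨a :: r, s, t, x, y, hxy, by simp [h1], by simp [h2]⟩
    | @rel a₁ l₁ a₂ l₂ h =>
      exact Or.inr ⟨[], l₂, l₁, a₂, a₁, h, rfl, rfl⟩

theorem plex_irrefl (u : List X) : ¬ PLex u u := by
  rw [plex_iff]; exact irrefl_of (List.Lex _) u

theorem plex_trans {u v w : List X} (h1 : PLex u v) (h2 : PLex v w) : PLex u w := by
  rw [plex_iff] at *
  have : IsStrictTotalOrder (List X) (List.Lex (fun a b : X => b < a)) :=
    { isStrictWeakOrder_of_isOrderConnected with }
  exact _root_.trans h2 h1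

theorem plexle_trans {u v w : List X} (h1 : PLexLe u v) (h2 : PLexLe v w) : PLexLe u w := by
  rcases h1 with rfl | h1
  · exact h2
  rcases h2 with rfl | h2
  · exact Or.inr h1
  · exact Or.inr (plex_trans h1 h2)

instance : IsTrans (List X) (PLexLe) := ⟨fun _ _ _ => plexle_trans⟩

theorem plex_of_plex_of_plexle {u v w : List X} (h1 : PLex u v) (h2 : PLexLe v w) :
    PLex u w := by
  rcases h2 with rfl | h2
  · exact h1
  · exact plex_trans h1 h2

/-- Key lemma: a nonempty prefix of a flattened list has a nonempty suffix that is
a prefix of one of the list members. -/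
theorem exists_suffix_prefix (l : List (List X)) (t : List X) (ht : t ≠ [])
    (hp : t <+: l.flatten) : ∃ w ∈ l, ∃ t'', t'' ≠ [] ∧ t'' <:+ t ∧ t'' <+: w := by
  induction l generalizing t with
  | nil => simp at hp; exact absurd hp ht
  | cons w rest ih =>
    rw [List.flatten_cons] at hp
    by_cases hlen : t.length ≤ w.length
    · exact ⟨w, by simp, t, ht, List.suffix_refl t,
        List.prefix_of_prefix_length_le hp (w.prefix_append _) hlen⟩
    · push_neg at hlen
      have hw : w <+: t :=
        List.prefix_of_prefix_length_le (w.prefix_append _) hp hlen.le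
      obtain ⟨t', rfl⟩ := hw
      have ht' : t' ≠ [] := by
        rintro rfl; simp at hlen
      have hp' : t' <+: rest.flatten := by
        obtain ⟨c, hc⟩ := hp
        exact ⟨c, by simpa [List.append_assoc] using hc⟩
      obtain ⟨w', hw', t'', h1, h2, h3⟩ := ih t' ht' hp'
      exact ⟨w', by simp [hw'], t'', h1, h2.trans (List.suffix_append w t'), h3⟩

end LyndonAux

/-- A Lyndon factor of a word `u` is a factor of one of the
Lyndon atoms of `u`. -/
theorem lyndon_factor_of_atom (u v : List X) (l : List (List X))
    (hl : IsLyndonDecomp u l) (hv : IsLyndon v) (hf : v <:+: u) :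
    ∃ w ∈ l, v <:+: w := by
  obtain ⟨rfl, hlyn, hchain⟩ := hl
  induction l with
  | nil =>
    simp at hf
    exact absurd hf hv.1
  | cons w rest ih =>
    rw [List.flatten_cons] at hf
    obtain ⟨a, b, hab⟩ := hf
    by_cases h1 : a.length + v.length ≤ w.length
    · -- v is an infix of w
      refine ⟨w, by simp, ?_⟩
      have hav : a ++ v <+: w := by
        refine List.prefix_of_prefix_length_le ⟨b, by simpa [List.append_assoc] using hab⟩
          (w.prefix_append _) (by simpa using h1)
      exact ((List.suffix_append a v).isInfix).trans hav.isInfix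
    · push_neg at h1
      by_cases h2 : w.length ≤ a.length
      · -- v is an infix of rest.flatten
        have haw : w <+: a :=
          List.prefix_of_prefix_length_le (w.prefix_append _)
            ⟨v ++ b, by simpa [List.append_assoc] using hab⟩ h2
        obtain ⟨a', rfl⟩ := haw
        have hrest : rest.flatten = a' ++ v ++ b := by
          have := hab
          rw [List.append_assoc, List.append_assoc] at this
          have := List.append_cancel_left this.symm
          simpa [List.append_assoc] using this
        obtain ⟨w', hw', hinf⟩ := ih ⟨a', b, hrest.symm⟩
          (fun x hx => hlyn x (by simp [hx])) hchain.tail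
        exact ⟨w', by simp [hw'], hinf⟩
      · -- v straddles the boundary: contradiction
        exfalso
        push_neg at h2
        -- a is a proper prefix of w
        have haw : a <+: w :=
          List.prefix_of_prefix_length_le ⟨v ++ b, by simpa [List.append_assoc] using hab⟩
            (w.prefix_append _) h2.le
        obtain ⟨s, rfl⟩ := haw
        have hs : s ≠ [] := by rintro rfl; simp at h2
        -- w = a ++ s  is a prefix of a ++ v, so s <+: v
        have hwav : a ++ s <+: a ++ v := by
          refine List.prefix_of_prefix_length_le ⟨rest.flatten, hab.symm⟩
            ⟨b, by rw [List.append_assoc]⟩ ?_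
          simp only [List.length_append] at h1 h2 ⊢
          omega
        have hsv : s <+: v := (List.prefix_append_right_inj a).mp hwav
        obtain ⟨t, rfl⟩ := hsv
        have ht : t ≠ [] := by
          rintro rfl
          simp only [List.append_nil, List.length_append] at h1
          omega
        -- rest.flatten = t ++ b
        have htr : t <+: rest.flatten := by
          have := hab
          rw [show a ++ (s ++ t) ++ b = (a ++ s) ++ (t ++ b) by simp [List.append_assoc],
            ] at this
          exact ⟨b, List.append_cancel_left this⟩
        obtain ⟨w', hw', t'', ht'', hsuf, hpre⟩ :=
          LyndonAux.exists_suffix_prefix rest t ht htr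
        obtain ⟨q, rfl⟩ := hsuf
        -- PLex t'' (s ++ (q ++ t''))  since Lyndon
        have hvlyn := hv
        have hP1 : PLex t'' (s ++ (q ++ t'')) :=
          hvlyn.2 (s ++ q) t'' (by simp) (by simp [hs]) ht''
        -- PLexLe w' t''
        have hP2 : PLexLe w' t'' := by
          rcases eq_or_ne t'' w' with rfl | hne
          · exact Or.inl rfl
          · exact Or.inr (Or.inl ⟨hpre, hne⟩)
        -- PLexLe w w'
        have hP3 : PLexLe (a ++ s) w' := by
          have hpair := (List.isChain_iff_pairwise.mp hchain)
          exact (List.pairwise_cons.mp hpair).1 w' hw'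
        -- PLexLe s (a ++ s)
        have hP4 : PLexLe s (a ++ s) := by
          rcases eq_or_ne a [] with rfl | ha
          · exact Or.inl rfl
          · exact Or.inr ((hlyn (a ++ s) (by simp)).2 a s rfl ha hs)
        -- PLex v s
        have hP5 : PLex (s ++ (q ++ t'')) s :=
          Or.inl ⟨⟨q ++ t'', rfl⟩, fun h => ht'' (by
            have := congrArg List.length h
            simp only [List.length_append] at this
            exact List.eq_nil_of_length_eq_zero (by omega))⟩
        have : PLex (s ++ (q ++ t'')) (s ++ (q ++ t'')) :=
          LyndonAux.plex_of_plex_of_plexle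
            (LyndonAux.plex_of_plex_of_plexle
              (LyndonAux.plex_of_plex_of_plexle hP5 hP4) hP3)
            (LyndonAux.plexle_trans hP2 (Or.inr hP1))
        exact LyndonAux.plex_irrefl _ this
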